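/- In a greedy t-spanner, no edge can be shortcut by a factor of t: for any edge AB of the greedy t-spanner and any points A = P₀, P₁, …, P_k = B such that each P_iP_{i+1} is a spanner edge distinct from AB, we have Σ_{i=0}^{k−1} dist(P_i, P_{i+1}) > t·dist(A,B). -/

import Mathlib

open scoped Classical

/-- The total Euclidean length of a polygonal path given by a list of points. -/
noncomputable def pathLength {α : Type*} [PseudoMetricSpace α] (l : List α) : ℝ :=
  (List.zipWith dist l l.tail).sum

/-- `l` is a walk from `u` to `v` whose consecutive pairs satisfy `Edge`. -/
def IsPath {α : Type*} (Edge : α → α → Prop) (u v : α) (l : List α) : Prop :=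
  l.Chain' Edge ∧ l.head? = some u ∧ l.getLast? = some v

/-- One step of the greedy spanner algorithm: add the pair `pq` to the current
edge set `S` unless the current graph already contains a path from `pq.1` to
`pq.2` of length at most `t` times their distance. -/
noncomputable def greedyStep {α : Type*} [MetricSpace α] (t : ℝ)
    (S : Set (α × α)) (pq : α × α) : Set (α × α) :=
  if ∃ l : List α, IsPath (fun a b => (a, b) ∈ S ∨ (b, a) ∈ S) pq.1 pq.2 l ∧
      pathLength l ≤ t * dist pq.1 pq.2 then S else insert pq S

/-- The greedy spanner obtained by processing the list `pairs` in order. -/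
noncomputable def greedySpanner {α : Type*} [MetricSpace α] (t : ℝ)
    (pairs : List (α × α)) : Set (α × α) :=
  pairs.foldl (greedyStep t) ∅

namespace SpannerAux

set_option linter.unusedSectionVars false

variable {α : Type*} [MetricSpace α]

lemma pathLength_nil : pathLength ([] : List α) = 0 := rfl

lemma pathLength_single (a : α) : pathLength [a] = 0 := by simp [pathLength]

lemma pathLength_cons_cons (a b : α) (l : List α) :
    pathLength (a :: b :: l) = dist a b + pathLength (b :: l) := by
  simp [pathLength]

lemma pathLength_nonneg : ∀ l : List α, 0 ≤ pathLength l
  | [] => le_refl _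
  | [a] => by rw [pathLength_single]
  | a :: b :: l => by
    rw [pathLength_cons_cons]
    exact add_nonneg dist_nonneg (pathLength_nonneg (b :: l))

lemma pathLength_split : ∀ (p : List α) (x : α) (s : List α),
    pathLength (p ++ x :: s) = pathLength (p ++ [x]) + pathLength (x :: s)
  | [], x, s => by simp [pathLength_single]
  | [a], x, s => by
    simp only [List.cons_append, List.nil_append]
    rw [pathLength_cons_cons, pathLength_cons_cons, pathLength_single]
    ring
  | a :: b :: p, x, s => by
    have ih := pathLength_split (b :: p) x s
    simp only [List.cons_append] at ih ⊢
    rw [pathLength_cons_cons, pathLength_cons_cons, ih]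
    ring

lemma pathLength_reverse : ∀ l : List α, pathLength l.reverse = pathLength l
  | [] => rfl
  | [a] => rfl
  | a :: b :: l => by
    have ih := pathLength_reverse (b :: l)
    have h1 : (b :: l).reverse = l.reverse ++ [b] := List.reverse_cons
    rw [List.reverse_cons, h1, List.append_assoc]
    have h2 : ([b] ++ [a] : List α) = b :: [a] := rfl
    rw [h2, pathLength_split l.reverse b [a], ← h1, ih,
      pathLength_cons_cons, pathLength_cons_cons, pathLength_single, dist_comm a b]
    ring

lemma pathLength_suffix {l₁ l₂ : List α} (h : l₁ <:+ l₂) : pathLength l₁ ≤ pathLength l₂ := by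
  obtain ⟨p, rfl⟩ := h
  cases l₁ with
  | nil => simpa [pathLength_nil] using pathLength_nonneg p
  | cons x s =>
    rw [pathLength_split p x s]
    have := pathLength_nonneg (p ++ [x])
    linarith

lemma pathLength_append {l₁ l₂ : List α} {a b : α}
    (h₁ : l₁.getLast? = some a) (h₂ : l₂.head? = some b) :
    pathLength (l₁ ++ l₂) = pathLength l₁ + dist a b + pathLength l₂ := by
  have hne : l₁ ≠ [] := by intro h; subst h; simp at h₁
  have hdl := List.dropLast_append_getLast hne
  have hga : l₁.getLast hne = a := by
    rw [List.getLast?_eq_getLast hne] at h₁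
    exact Option.some_injective _ h₁
  cases l₂ with
  | nil => simp at h₂
  | cons c s =>
    have hc : c = b := by simpa using h₂
    rw [← hc]
    conv_lhs => rw [← hdl]
    rw [hga, List.append_assoc]
    have : ([a] ++ c :: s : List α) = a :: c :: s := rfl
    rw [this, pathLength_split l₁.dropLast a (c :: s), pathLength_cons_cons]
    conv_rhs => rw [← hdl, hga]
    ring

lemma head?_append_cons (p : List α) (x : α) (s : List α) :
    (p ++ x :: s).head? = (p ++ [x]).head? := by
  cases p <;> simp

lemma getLast?_suffix {l₁ l₂ : List α} (h : l₁ <:+ l₂) (hne : l₁ ≠ []) :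
    l₂.getLast? = l₁.getLast? := by
  obtain ⟨p, rfl⟩ := h
  rw [List.getLast?_append]
  cases hl : l₁.getLast? with
  | none => exact absurd (List.getLast?_eq_none_iff.mp hl) hne
  | some a => simp

lemma chain'_reverse_symm {R : α → α → Prop} (hs : ∀ a b, R a b → R b a)
    {l : List α} (h : l.Chain' R) : l.reverse.Chain' R :=
  List.isChain_reverse.mpr (h.imp fun a b hab => hs a b hab)

lemma first_occ {R Q : α → α → Prop} :
    ∀ l : List α, l.Chain' R →
      l.Chain' (fun a b => R a b ∧ ¬ Q a b) ∨
      ∃ p x y q, l = p ++ x :: y :: q ∧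
        (p ++ [x]).Chain' (fun a b => R a b ∧ ¬ Q a b) ∧ Q x y
  | [], _ => Or.inl List.isChain_nil
  | [a], _ => Or.inl (List.isChain_singleton a)
  | a :: b :: l, h => by
    rw [List.Chain', List.isChain_cons_cons] at h
    by_cases hq : Q a b
    · exact Or.inr ⟨[], a, b, l, rfl, List.isChain_singleton a, hq⟩
    · rcases first_occ (b :: l) h.2 with h1 | ⟨p, x, y, q, heq, hch, hQ⟩
      · exact Or.inl (List.isChain_cons_cons.mpr ⟨⟨h.1, hq⟩, h1⟩)
      · refine Or.inr ⟨a :: p, x, y, q, by rw [List.cons_append, ← heq], ?_, hQ⟩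
        rw [List.cons_append]
        refine List.isChain_cons.mpr ⟨?_, hch⟩
        intro z hz
        have hb : (p ++ [x]).head? = some b := by
          rw [← head?_append_cons p x (y :: q), ← heq]; rfl
        rw [hb] at hz
        simp only [Option.mem_def, Option.some.injEq] at hz
        subst hz
        exact ⟨h.1, hq⟩

lemma last_occ {R Q : α → α → Prop} :
    ∀ l : List α, l.Chain' R →
      l.Chain' (fun a b => R a b ∧ ¬ Q a b) ∨
      ∃ p x y q, l = p ++ x :: y :: q ∧
        (y :: q).Chain' (fun a b => R a b ∧ ¬ Q a b) ∧ Q x y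
  | [], _ => Or.inl List.isChain_nil
  | [a], _ => Or.inl (List.isChain_singleton a)
  | a :: b :: l, h => by
    rw [List.Chain', List.isChain_cons_cons] at h
    rcases last_occ (b :: l) h.2 with h1 | ⟨p, x, y, q, heq, hch, hQ⟩
    · by_cases hq : Q a b
      · exact Or.inr ⟨[], a, b, l, rfl, h1, hq⟩
      · exact Or.inl (List.isChain_cons_cons.mpr ⟨⟨h.1, hq⟩, h1⟩)
    · exact Or.inr ⟨a :: p, x, y, q, by rw [List.cons_append, ← heq], hch, hQ⟩


/-- The key property of a greedy spanner edge set. -/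
def Pprop (t : ℝ) (S : Set (α × α)) : Prop :=
  ∀ A B : α, ((A, B) ∈ S ∨ (B, A) ∈ S) →
    ∀ l : List α,
      l.Chain' (fun a b => ((a, b) ∈ S ∨ (b, a) ∈ S) ∧
        ¬((a = A ∧ b = B) ∨ (a = B ∧ b = A))) →
      l.head? = some A → l.getLast? = some B → 2 ≤ l.length →
      t * dist A B < pathLength l

lemma insert_preserves (t : ℝ) (ht : 1 < t) (S : Set (α × α)) (u v : α)
    (hpq : u ≠ v)
    (hne : ∀ e ∈ S, e.1 ≠ e.2)
    (hle : ∀ e ∈ S, dist e.1 e.2 ≤ dist u v)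
    (hP : Pprop t S)
    (H : ∀ l : List α, IsPath (fun a b => (a, b) ∈ S ∨ (b, a) ∈ S) u v l →
        t * dist u v < pathLength l) :
    Pprop t (insert (u, v) S) := by
  have relsymm : ∀ a b : α, ((a, b) ∈ S ∨ (b, a) ∈ S) → ((b, a) ∈ S ∨ (a, b) ∈ S) :=
    fun a b h => h.symm
  -- H' : no S-path between u and v (in either direction) of length ≤ t·d(u,v)
  have H' : ∀ l : List α, l.Chain' (fun a b => (a, b) ∈ S ∨ (b, a) ∈ S) →
      ((l.head? = some u ∧ l.getLast? = some v) ∨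
       (l.head? = some v ∧ l.getLast? = some u)) →
      pathLength l ≤ t * dist u v → False := by
    intro l hch hends hlen
    rcases hends with ⟨hh, hl⟩ | ⟨hh, hl⟩
    · exact absurd (H l ⟨hch, hh, hl⟩) (not_lt.mpr hlen)
    · have h2 := H l.reverse ⟨chain'_reverse_symm relsymm hch,
        by rw [List.head?_reverse, hl], by rw [List.getLast?_reverse, hh]⟩
      rw [pathLength_reverse] at h2
      exact absurd h2 (not_lt.mpr hlen)
  intro A B hAB l hch hhead hlast hlen2
  by_cases hm : (A = u ∧ B = v) ∨ (A = v ∧ B = u)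
  · -- AB is the new edge: path avoids it, so it lives in S
    have hch' : l.Chain' (fun a b => (a, b) ∈ S ∨ (b, a) ∈ S) := by
      refine hch.imp ?_
      rintro a b ⟨hab, hnot⟩
      rcases hab with h1 | h1
      · rcases Set.mem_insert_iff.mp h1 with h2 | h2
        · exfalso
          apply hnot
          have ha : a = u ∧ b = v := ⟨congrArg Prod.fst h2, congrArg Prod.snd h2⟩
          rcases hm with ⟨rfl, rfl⟩ | ⟨rfl, rfl⟩
          · exact Or.inl ha
          · exact Or.inr ⟨ha.1, ha.2⟩
        · exact Or.inl h2
      · rcases Set.mem_insert_iff.mp h1 with h2 | h2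
        · exfalso
          apply hnot
          have ha : b = u ∧ a = v := ⟨congrArg Prod.fst h2, congrArg Prod.snd h2⟩
          rcases hm with ⟨rfl, rfl⟩ | ⟨rfl, rfl⟩
          · exact Or.inr ⟨ha.2, ha.1⟩
          · exact Or.inl ⟨ha.2, ha.1⟩
        · exact Or.inr h2
    by_contra hcon
    rw [not_lt] at hcon
    have hdeq : dist A B = dist u v := by
      rcases hm with ⟨rfl, rfl⟩ | ⟨rfl, rfl⟩
      · rfl
      · exact dist_comm _ _
    refine H' l hch' ?_ (by rwa [hdeq] at hcon)
    rcases hm with ⟨rfl, rfl⟩ | ⟨rfl, rfl⟩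
    · exact Or.inl ⟨hhead, hlast⟩
    · exact Or.inr ⟨hhead, hlast⟩
  · -- AB is an old edge
    have hABS : (A, B) ∈ S ∨ (B, A) ∈ S := by
      rcases hAB with h1 | h1 <;> rcases Set.mem_insert_iff.mp h1 with h2 | h2
      · exact absurd (Or.inl ⟨congrArg Prod.fst h2, congrArg Prod.snd h2⟩) hm
      · exact Or.inl h2
      · exact absurd (Or.inr ⟨congrArg Prod.snd h2, congrArg Prod.fst h2⟩) hm
      · exact Or.inr h2
    have hABne : A ≠ B := by
      rcases hABS with h | h
      · exact hne _ h
      · exact (hne _ h).symm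
    have hdAB : dist A B ≤ dist u v := by
      rcases hABS with h | h
      · exact hle _ h
      · rw [dist_comm]; exact hle _ h
    have hposuv : 0 < dist u v := dist_pos.mpr hpq
    by_contra hcon
    rw [not_lt] at hcon
    -- occurrence analysis
    have key : ∀ a b : α,
        ((((a, b) ∈ insert (u, v) S ∨ (b, a) ∈ insert (u, v) S) ∧
          ¬((a = A ∧ b = B) ∨ (a = B ∧ b = A))) ∧
          ¬((a = u ∧ b = v) ∨ (a = v ∧ b = u))) →
        ((a, b) ∈ S ∨ (b, a) ∈ S) ∧ ¬((a = A ∧ b = B) ∨ (a = B ∧ b = A)) := by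
      rintro a b ⟨⟨hmem, hnab⟩, hnq⟩
      refine ⟨?_, hnab⟩
      rcases hmem with h1 | h1
      · rcases Set.mem_insert_iff.mp h1 with h2 | h2
        · exact absurd (Or.inl ⟨congrArg Prod.fst h2, congrArg Prod.snd h2⟩) hnq
        · exact Or.inl h2
      · rcases Set.mem_insert_iff.mp h1 with h2 | h2
        · exact absurd (Or.inr ⟨congrArg Prod.snd h2, congrArg Prod.fst h2⟩) hnq
        · exact Or.inr h2
    rcases first_occ (Q := fun a b => (a = u ∧ b = v) ∨ (a = v ∧ b = u)) l hch with
      hnoc | ⟨p, x, y, q1, rfl, hpch, hQxy⟩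
    · -- no occurrence of the new edge: contradict Pprop of S
      have := hP A B hABS l (hnoc.imp key) hhead hlast hlen2
      exact absurd hcon (not_le.mpr this)
    · have hsufchain := (List.isChain_append.mp hch).2.1
      rcases last_occ (Q := fun a b => (a = u ∧ b = v) ∨ (a = v ∧ b = u))
          (x :: y :: q1) hsufchain with hnoc2 | ⟨p2, x', y', s, heq2, hsch, hQ'⟩
      · exact absurd hQxy (List.isChain_cons_cons.mp hnoc2).1.2
      · -- suffix relationship
        have hsuf1 : (y' :: s) <:+ (x :: y :: q1) := ⟨p2 ++ [x'], by rw [heq2]; simp⟩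
        have hsuf2 : (y :: q1) <:+ (x :: y :: q1) := ⟨[x], rfl⟩
        have hlensuf : (y' :: s).length ≤ (y :: q1).length := by
          have := congrArg List.length heq2
          simp only [List.length_cons, List.length_append] at this ⊢
          omega
        have hy'ssuffix : (y' :: s) <:+ (y :: q1) :=
          List.suffix_of_suffix_length_le hsuf1 hsuf2 hlensuf
        have hy'sl : (y' :: s) <:+ (p ++ x :: y :: q1) :=
          hy'ssuffix.trans ⟨p ++ [x], by simp⟩
        have hxy : dist x y = dist u v := by
          rcases hQxy with ⟨rfl, rfl⟩ | ⟨rfl, rfl⟩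
          · rfl
          · exact dist_comm _ _
        have hsplit : pathLength (p ++ x :: y :: q1) =
            pathLength (p ++ [x]) + (dist x y + pathLength (y :: q1)) := by
          rw [pathLength_split p x (y :: q1), pathLength_cons_cons]
        have hs_le : pathLength (y' :: s) ≤ pathLength (y :: q1) :=
          pathLength_suffix hy'ssuffix
        have hheadpx : (p ++ [x]).head? = some A := by
          rw [head?_append_cons] at hhead
          exact hhead
        have hlastys : (y' :: s).getLast? = some B := by
          rw [getLast?_suffix hy'sl (by simp)] at hlast
          exact hlast
        have hpchS := hpch.imp key
        have hschS := hsch.imp key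
        by_cases hxy' : x = y'
        · -- splice out the loop: a shorter S-path from A to B avoiding AB
          have hch2 : ((p ++ [x]) ++ s).Chain'
              (fun a b => ((a, b) ∈ S ∨ (b, a) ∈ S) ∧
                ¬((a = A ∧ b = B) ∨ (a = B ∧ b = A))) := by
            rw [List.Chain', List.isChain_append]
            refine ⟨hpchS, hschS.tail, ?_⟩
            intro z hz w hw
            have hz' : z = x := by
              rw [List.getLast?_concat] at hz
              simpa using hz.symm
            cases s with
            | nil => simp at hw
            | cons h s' =>
              have hrel := (List.isChain_cons_cons.mp hschS).1
              have hw' : w = h := by simpa using hw.symm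
              rw [hz', hw', hxy']
              exact hrel
          have hhead2 : ((p ++ [x]) ++ s).head? = some A := by
            rw [List.head?_append, hheadpx]; rfl
          have hlast2 : ((p ++ [x]) ++ s).getLast? = some B := by
            cases s with
            | nil =>
              have hyB : y' = B := by simpa using hlastys
              simp [List.getLast?_concat, hxy', hyB]
            | cons h s' =>
              rw [List.getLast?_append]
              have : (h :: s').getLast? = some B := by
                have h2 := hlastys
                rwa [List.getLast?_cons_cons] at h2
              rw [this]
              rfl
          have hlen2' : 2 ≤ ((p ++ [x]) ++ s).length := by
            rcases hl2 : (p ++ [x]) ++ s with _ | ⟨c, _ | ⟨d, l3⟩⟩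
            · exfalso; simpa [hl2] using hhead2
            · exfalso
              rw [hl2] at hhead2 hlast2
              simp only [List.head?_cons, Option.some.injEq] at hhead2
              simp only [List.getLast?_singleton, Option.some.injEq] at hlast2
              exact hABne (hhead2.symm.trans hlast2)
            · simp
          have hlt := hP A B hABS _ hch2 hhead2 hlast2 hlen2'
          have hpl2 : pathLength ((p ++ [x]) ++ s) =
              pathLength (p ++ [x]) + pathLength (y' :: s) := by
            have he : (p ++ [x]) ++ s = p ++ x :: s := by simp
            rw [he, pathLength_split, hxy']
          rw [hpl2] at hlt
          rw [hsplit, hxy] at hcon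
          linarith
        · -- distinct endpoints: build a short S-path between u and v
          have hch3 : ((p ++ [x]).reverse ++ (y' :: s).reverse).Chain'
              (fun a b => (a, b) ∈ S ∨ (b, a) ∈ S) := by
            rw [List.Chain', List.isChain_append]
            refine ⟨chain'_reverse_symm relsymm (hpchS.imp fun a b h => h.1),
              chain'_reverse_symm relsymm (hschS.imp fun a b h => h.1), ?_⟩
            intro z hz w hw
            rw [List.getLast?_reverse, hheadpx] at hz
            rw [List.head?_reverse, hlastys] at hw
            have hz' : z = A := by simpa using hz.symm
            have hw' : w = B := by simpa using hw.symm
            rw [hz', hw']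
            exact hABS
          have hhead3 : ((p ++ [x]).reverse ++ (y' :: s).reverse).head? = some x := by
            rw [List.head?_append, List.head?_reverse, List.getLast?_concat]; rfl
          have hlast3 : ((p ++ [x]).reverse ++ (y' :: s).reverse).getLast? = some y' := by
            rw [List.getLast?_append, List.getLast?_reverse]; rfl
          have hpl3 : pathLength ((p ++ [x]).reverse ++ (y' :: s).reverse) ≤
              t * dist u v := by
            rw [pathLength_append (a := A) (b := B)
              (by rw [List.getLast?_reverse]; exact hheadpx)
              (by rw [List.head?_reverse]; exact hlastys),
              pathLength_reverse, pathLength_reverse]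
            have htpos : (0:ℝ) ≤ t := le_of_lt (lt_trans zero_lt_one ht)
            have h5 : t * dist A B ≤ t * dist u v := mul_le_mul_of_nonneg_left hdAB htpos
            rw [hsplit, hxy] at hcon
            linarith
          -- endpoints are u,v in some order
          have hxuv : x = u ∨ x = v := by
            rcases hQxy with ⟨h1, _⟩ | ⟨h1, _⟩
            · exact Or.inl h1
            · exact Or.inr h1
          have hy'uv : y' = v ∨ y' = u := by
            rcases hQ' with ⟨_, h1⟩ | ⟨_, h1⟩
            · exact Or.inl h1
            · exact Or.inr h1
          refine H' _ hch3 ?_ hpl3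
          rcases hxuv with rfl | rfl <;> rcases hy'uv with rfl | rfl
          · exact Or.inl ⟨hhead3, hlast3⟩
          · exact absurd rfl hxy'
          · exact absurd rfl hxy'
          · exact Or.inr ⟨hhead3, hlast3⟩


lemma foldl_P (t : ℝ) (ht : 1 < t) :
    ∀ (rest : List (α × α)) (S : Set (α × α)),
      (∀ e ∈ S, e.1 ≠ e.2) →
      (∀ e ∈ S, ∀ f ∈ rest, dist e.1 e.2 ≤ dist f.1 f.2) →
      Pprop t S →
      rest.Pairwise (fun x y => dist x.1 x.2 ≤ dist y.1 y.2) →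
      (∀ pq ∈ rest, pq.1 ≠ pq.2) →
      Pprop t (rest.foldl (greedyStep t) S)
  | [], _, _, _, hP, _, _ => hP
  | ⟨a, b⟩ :: rest, S, hne, hord, hP, hpw, hd => by
    rw [List.foldl_cons]
    rcases List.pairwise_cons.mp hpw with ⟨hpq_le, hpw'⟩
    have hdpq : a ≠ b := hd (a, b) (List.mem_cons_self)
    simp only [greedyStep]
    split_ifs with hcond
    · exact foldl_P t ht rest S hne
        (fun e he f hf => hord e he f (List.mem_cons_of_mem _ hf)) hP hpw'
        (fun x hx => hd x (List.mem_cons_of_mem _ hx))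
    · push_neg at hcond
      refine foldl_P t ht rest (insert (a, b) S) ?_ ?_ ?_ hpw'
        (fun x hx => hd x (List.mem_cons_of_mem _ hx))
      · intro e he
        rcases Set.mem_insert_iff.mp he with rfl | he'
        · exact hdpq
        · exact hne e he'
      · intro e he f hf
        rcases Set.mem_insert_iff.mp he with rfl | he'
        · exact hpq_le f hf
        · exact hord e he' f (List.mem_cons_of_mem _ hf)
      · exact insert_preserves t ht S a b hdpq hne
          (fun e he => hord e he (a, b) (List.mem_cons_self)) hP
          (fun l hl => hcond l hl)

end SpannerAux

/-- Short-cutting lemma: no edge AB of a greedy t-spanner can be shortcut by a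
factor of t by a path of other spanner edges. -/
theorem stmt3 {α : Type*} [MetricSpace α] (t : ℝ) (ht : 1 < t)
    (pairs : List (α × α)) (hd : ∀ pq ∈ pairs, pq.1 ≠ pq.2)
    (hsorted : pairs.Pairwise (fun x y => dist x.1 x.2 ≤ dist y.1 y.2))
    (S : Set (α × α)) (hS : S = greedySpanner t pairs)
    (A B : α) (hAB : (A, B) ∈ S ∨ (B, A) ∈ S)
    (l : List α)
    (hl : IsPath (fun a b => ((a, b) ∈ S ∨ (b, a) ∈ S) ∧
      ¬((a = A ∧ b = B) ∨ (a = B ∧ b = A))) A B l)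
    (hlen : 2 ≤ l.length) :
    t * dist A B < pathLength l := by
  subst hS
  have h0 : SpannerAux.Pprop t (greedySpanner t pairs) :=
    SpannerAux.foldl_P t ht pairs ∅
      (fun e he => absurd he (Set.notMem_empty e))
      (fun e he => absurd he (Set.notMem_empty e))
      (by intro A B hAB
          rcases hAB with h | h <;> exact absurd h (Set.notMem_empty _))
      hsorted hd
  exact h0 A B hAB l hl.1 hl.2.1 hl.2.2 hlen
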